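/- Let A be a real m×n matrix. Then rank(A^ν) = min(m, Σ_{i=1}^n ν_i) for every ν ∈ {0,1}^n if and only if rank(A) = min(m, n) and spark(A) = rank(A) + 1. -/

import Mathlib

noncomputable section

/-- `rank(A^ν)`, the rank of the submatrix of `A` formed by the columns `i` with `ν i = true`. -/
def subRank {m n : ℕ} (A : Matrix (Fin m) (Fin n) ℝ) (ν : Fin n → Bool) : ℕ :=
  (A.submatrix id (Subtype.val : {i : Fin n // ν i = true} → Fin n)).rank

/-- `spark(A)`: the smallest number of columns of `A` forming a linearly dependent set,
with the convention `spark(A) = n + 1` when all `n` columns are linearly independent. -/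
def spark {m n : ℕ} (A : Matrix (Fin m) (Fin n) ℝ) : ℕ :=
  sInf ({k | ∃ s : Finset (Fin n), s.card = k ∧
      ¬ LinearIndependent ℝ (fun j : s => A.transpose (j : Fin n))} ∪ {n + 1})

open Submodule Module Matrix

lemma subRank_eq_finrank {m n : ℕ} (A : Matrix (Fin m) (Fin n) ℝ) (ν : Fin n → Bool) :
    subRank A ν = finrank ℝ (span ℝ (Aᵀ '' {i | ν i = true})) := by
  rw [subRank, Matrix.rank_eq_finrank_span_cols]
  have h : ((A.submatrix id (Subtype.val : {i : Fin n // ν i = true} → Fin n))ᵀ)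
      = Aᵀ ∘ Subtype.val := rfl
  have h2 : Set.range (Aᵀ ∘ (Subtype.val : {i : Fin n // ν i = true} → Fin n))
      = Aᵀ '' {i | ν i = true} := by
    ext x; simp; exact ⟨fun ⟨a, b, e⟩ => ⟨a, b, e⟩, fun ⟨a, b, e⟩ => ⟨a, b, e⟩⟩
  rw [← h2]; rfl

lemma indep_iff_finrank {m n : ℕ} (A : Matrix (Fin m) (Fin n) ℝ) (s : Finset (Fin n)) :
    LinearIndependent ℝ (fun j : s => Aᵀ (j : Fin n)) ↔
      finrank ℝ (span ℝ (Aᵀ '' ↑s)) = s.card := by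
  rw [linearIndependent_iff_card_eq_finrank_span]
  have h : (Set.range fun j : s => Aᵀ (j : Fin n)) = Aᵀ '' ↑s := by
    ext x; simp; rfl
  rw [h, Fintype.card_coe, Set.finrank]
  exact eq_comm

lemma finrank_span_image_le_m {m n : ℕ} (A : Matrix (Fin m) (Fin n) ℝ) (s : Set (Fin n)) :
    finrank ℝ (span ℝ (Aᵀ '' s)) ≤ m := by
  calc finrank ℝ (span ℝ (Aᵀ '' s)) ≤ finrank ℝ (Fin m → ℝ) := (span ℝ (Aᵀ '' s)).finrank_le
    _ = m := Module.finrank_fin_fun ℝ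

lemma dep_of_card_gt {m n : ℕ} (A : Matrix (Fin m) (Fin n) ℝ) (s : Finset (Fin n))
    (h : m < s.card) : ¬ LinearIndependent ℝ (fun j : s => Aᵀ (j : Fin n)) := by
  intro hli
  have := hli.fintype_card_le_finrank
  rw [Fintype.card_coe, Module.finrank_fin_fun] at this
  omega

/-- `rank(A^ν) = min(m, Σᵢ νᵢ)` for every `ν ∈ {0,1}^n` if and only if
`rank(A) = min(m, n)` and `spark(A) = rank(A) + 1`. -/
theorem subRank_eq_min_iff_spark {m n : ℕ} (A : Matrix (Fin m) (Fin n) ℝ) :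
    (∀ ν : Fin n → Bool,
        subRank A ν = min m (Finset.univ.filter (fun i => ν i = true)).card)
      ↔ (A.rank = min m n ∧ spark A = A.rank + 1) := by
  classical
  constructor
  · intro h
    have hrank : A.rank = min m n := by
      have h1 := h (fun _ => true)
      rw [subRank_eq_finrank] at h1
      have hset : {i : Fin n | (fun _ : Fin n => true) i = true} = Set.univ := by
        ext i; simp
      rw [hset, show (Aᵀ '' Set.univ) = Set.range A.col from Set.image_univ, ← Matrix.rank_eq_finrank_span_cols] at h1
      simpa using h1
    refine ⟨hrank, ?_⟩
    have hindep : ∀ s : Finset (Fin n), s.card ≤ min m n →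
        LinearIndependent ℝ (fun j : s => Aᵀ (j : Fin n)) := by
      intro s hs
      rw [indep_iff_finrank]
      have h1 := h (fun i => decide (i ∈ s))
      have hfil : Finset.univ.filter (fun i => decide (i ∈ s) = true) = s := by
        ext i; simp
      have hset : {i : Fin n | (fun i => decide (i ∈ s)) i = true} = ↑s := by
        ext i; simp
      rw [subRank_eq_finrank, hset, hfil, min_eq_right (hs.trans (min_le_left _ _))] at h1
      exact h1
    rw [hrank]
    apply le_antisymm
    · apply Nat.sInf_le
      rcases le_or_gt n m with hnm | hmn
      · right
        simp [min_eq_right hnm]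
      · left
        obtain ⟨s, -, hsc⟩ := Finset.exists_subset_card_eq
          (show m + 1 ≤ (Finset.univ : Finset (Fin n)).card by simpa using hmn)
        have hmin : min m n = m := min_eq_left hmn.le
        exact ⟨s, by omega, dep_of_card_gt A s (by omega)⟩
    · apply le_csInf ⟨n + 1, Or.inr rfl⟩
      rintro k hk
      rcases hk with ⟨s, hsc, hdep⟩ | hk
      · by_contra hcon
        push_neg at hcon
        exact hdep (hindep s (by omega))
      · have hk' : k = n + 1 := hk
        have : min m n ≤ n := min_le_right _ _
        omega
  · rintro ⟨hrank, hspark⟩ ν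
    set s := Finset.univ.filter (fun i => ν i = true) with hsdef
    have hset : {i : Fin n | ν i = true} = ↑s := by ext i; simp [hsdef]
    rw [subRank_eq_finrank, hset]
    have hindep : ∀ t : Finset (Fin n), t.card ≤ A.rank →
        LinearIndependent ℝ (fun j : t => Aᵀ (j : Fin n)) := by
      intro t ht
      by_contra hdep
      have : spark A ≤ t.card := Nat.sInf_le (Or.inl ⟨t, rfl, hdep⟩)
      omega
    have hle_m : finrank ℝ (span ℝ (Aᵀ '' ↑s)) ≤ m := finrank_span_image_le_m A ↑s
    rcases le_or_gt s.card A.rank with hc | hc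
    · rw [(indep_iff_finrank A s).1 (hindep s hc)]
      have : s.card ≤ m := hc.trans (by rw [hrank]; exact min_le_left _ _)
      omega
    · have hsn : s.card ≤ n := by
        simpa using Finset.card_filter_le Finset.univ (fun i => ν i = true)
      have hm : A.rank = m := by
        rcases min_cases m n with ⟨h1, h2⟩ | ⟨h1, h2⟩ <;> omega
      obtain ⟨t, hts, htc⟩ := Finset.exists_subset_card_eq (show m ≤ s.card by omega)
      have hti := hindep t (by rw [htc, hm])
      have ht1 : finrank ℝ (span ℝ (Aᵀ '' ↑t)) = m := by
        rw [(indep_iff_finrank A t).1 hti, htc]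
      have hmono : finrank ℝ (span ℝ (Aᵀ '' ↑t)) ≤ finrank ℝ (span ℝ (Aᵀ '' ↑s)) :=
        Submodule.finrank_mono (span_mono (Set.image_mono hts))
      omega

end
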